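/- Corridor Lemma: For infinite binary words x and y, y belongs to the abelian closure of x if and only if for all n ∈ ℕ: inf over length-n factors u of y of |u|_1 is at least inf over length-n factors of x of |u|_1, and sup over length-n factors of y of |u|_1 is at most sup over length-n factors of x of |u|_1. -/

import Mathlib

/-- `u` is a factor of the infinite word `x`. -/
def Factor {A : Type*} (x : ℕ → A) (u : List A) : Prop :=
  ∃ i, u = (List.range u.length).map fun k => x (i + k)

/-- Abelian equivalence of finite words. -/
def AbEq {A : Type*} [DecidableEq A] (u v : List A) : Prop :=
  ∀ a, u.count a = v.count a

/-- `y` is in the abelian closure of `x`. -/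
def InAbClosure {A : Type*} [DecidableEq A] (x y : ℕ → A) : Prop :=
  ∀ u, Factor y u → ∃ v, Factor x v ∧ AbEq u v

/-- The length-`n` window of `x` starting at `i`. -/
def win (x : ℕ → Fin 2) (i n : ℕ) : List (Fin 2) :=
  (List.range n).map fun k => x (i + k)

lemma win_length (x : ℕ → Fin 2) (i n : ℕ) : (win x i n).length = n := by
  simp [win]

lemma factor_win (x : ℕ → Fin 2) (i n : ℕ) : Factor x (win x i n) :=
  ⟨i, by rw [win_length]; rfl⟩

/-- number of ones in the window. -/
def cnt (x : ℕ → Fin 2) (n i : ℕ) : ℕ := (win x i n).count 1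

lemma count01 (l : List (Fin 2)) : l.count 0 + l.count 1 = l.length := by
  induction l with
  | nil => simp
  | cons a t ih =>
    fin_cases a <;> simp [List.count_cons] <;> omega

lemma win_succ_right (x : ℕ → Fin 2) (i n : ℕ) :
    win x i (n+1) = win x i n ++ [x (i+n)] := by
  simp [win, List.range_succ]

lemma win_succ_left (x : ℕ → Fin 2) (i n : ℕ) :
    win x i (n+1) = x i :: win x (i+1) n := by
  simp only [win, List.range_succ_eq_map, List.map_cons, List.map_map]
  congr 1
  refine List.map_congr_left fun a _ => ?_
  simp only [Function.comp_apply]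
  exact congrArg x (by omega)

lemma cnt_step (x : ℕ → Fin 2) (n i : ℕ) :
    cnt x n i ≤ cnt x n (i+1) + 1 ∧ cnt x n (i+1) ≤ cnt x n i + 1 := by
  have e : cnt x n i + (if x (i+n) = 1 then 1 else 0)
      = (if x i = 1 then 1 else 0) + cnt x n (i+1) := by
    have h1 : (win x i (n+1)).count 1 = cnt x n i + (if x (i+n) = 1 then 1 else 0) := by
      rw [win_succ_right]
      simp [cnt, List.count_append, List.count_singleton]
    have h2 : (win x i (n+1)).count 1 = cnt x n (i+1) + (if x i = 1 then 1 else 0) := by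
      rw [win_succ_left]
      simp [cnt, List.count_cons]
    omega
  constructor <;> split_ifs at e <;> omega

lemma ivt_aux (f : ℕ → ℕ) (hf : ∀ m, f m ≤ f (m+1) + 1 ∧ f (m+1) ≤ f m + 1) (k : ℕ) :
    ∀ d a b, (b = a + d ∨ a = b + d) → f a ≤ k → k ≤ f b → ∃ m, f m = k := by
  intro d
  induction d with
  | zero =>
    intro a b hab h1 h2
    have : a = b := by omega
    subst this
    exact ⟨a, le_antisymm h1 h2⟩
  | succ d ih =>
    intro a b hab h1 h2
    rcases hab with h | h
    · rcases le_or_gt (f (a+1)) k with hc | hc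
      · exact ih (a+1) b (Or.inl (by omega)) hc h2
      · exact ⟨a, le_antisymm h1 (by have := (hf a).2; omega)⟩
    · rcases le_or_gt k (f (b+1)) with hc | hc
      · exact ih a (b+1) (Or.inr (by omega)) h1 hc
      · exact ⟨b, le_antisymm (by have := (hf b).1; omega) h2⟩

lemma ivt (f : ℕ → ℕ) (hf : ∀ m, f m ≤ f (m+1) + 1 ∧ f (m+1) ≤ f m + 1)
    {a b k : ℕ} (h1 : f a ≤ k) (h2 : k ≤ f b) : ∃ m, f m = k := by
  rcases le_total a b with h | h
  · exact ivt_aux f hf k (b - a) a b (Or.inl (by omega)) h1 h2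
  · exact ivt_aux f hf k (a - b) a b (Or.inr (by omega)) h1 h2

lemma setEq (x : ℕ → Fin 2) (n : ℕ) :
    {k | ∃ u, Factor x u ∧ u.length = n ∧ u.count 1 = k} = Set.range (cnt x n) := by
  ext k
  constructor
  · rintro ⟨u, ⟨i, hu⟩, hlen, hc⟩
    rw [hlen] at hu
    refine ⟨i, ?_⟩
    show (List.map (fun k => x (i + k)) (List.range n)).count 1 = k
    rw [← hu]; exact hc
  · rintro ⟨i, rfl⟩
    exact ⟨win x i n, factor_win x i n, win_length x i n, rfl⟩

lemma setNe (x : ℕ → Fin 2) (n : ℕ) :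
    {k | ∃ u, Factor x u ∧ u.length = n ∧ u.count 1 = k}.Nonempty := by
  rw [setEq]; exact ⟨cnt x n 0, 0, rfl⟩

lemma setBdd (x : ℕ → Fin 2) (n : ℕ) :
    BddAbove {k | ∃ u, Factor x u ∧ u.length = n ∧ u.count 1 = k} := by
  refine ⟨n, ?_⟩
  rintro k ⟨u, hu, hlen, hc⟩
  rw [← hc, ← hlen]
  exact List.count_le_length

theorem corridor_lemma (x y : ℕ → Fin 2) :
    InAbClosure x y ↔
      ∀ n : ℕ,
        sInf {k | ∃ u, Factor x u ∧ u.length = n ∧ u.count 1 = k} ≤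
          sInf {k | ∃ u, Factor y u ∧ u.length = n ∧ u.count 1 = k} ∧
        sSup {k | ∃ u, Factor y u ∧ u.length = n ∧ u.count 1 = k} ≤
          sSup {k | ∃ u, Factor x u ∧ u.length = n ∧ u.count 1 = k} := by
  constructor
  · intro h n
    have hsub : {k | ∃ u, Factor y u ∧ u.length = n ∧ u.count 1 = k} ⊆
        {k | ∃ u, Factor x u ∧ u.length = n ∧ u.count 1 = k} := by
      rintro k ⟨u, hu, hlen, hc⟩
      obtain ⟨v, hv, hab⟩ := h u hu
      have h0 := hab 0
      have h1 := hab 1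
      have cu := count01 u
      have cv := count01 v
      exact ⟨v, hv, by omega, by omega⟩
    constructor
    · exact Nat.sInf_le (hsub (Nat.sInf_mem (setNe y n)))
    · exact csSup_le (setNe y n) fun k hk => le_csSup (setBdd x n) (hsub hk)
  · intro h u hu
    set n := u.length with hn
    set k := u.count 1 with hk
    have hmem : k ∈ {k | ∃ u, Factor y u ∧ u.length = n ∧ u.count 1 = k} := ⟨u, hu, rfl, rfl⟩
    have hk1 : sInf {k | ∃ u, Factor x u ∧ u.length = n ∧ u.count 1 = k} ≤ k :=
      le_trans (h n).1 (Nat.sInf_le hmem)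
    have hk2 : k ≤ sSup {k | ∃ u, Factor x u ∧ u.length = n ∧ u.count 1 = k} :=
      le_trans (le_csSup (setBdd y n) hmem) (h n).2
    obtain ⟨a, ha⟩ : sInf {k | ∃ u, Factor x u ∧ u.length = n ∧ u.count 1 = k} ∈
        Set.range (cnt x n) := by
      rw [← setEq]; exact Nat.sInf_mem (setNe x n)
    obtain ⟨b, hb⟩ : sSup {k | ∃ u, Factor x u ∧ u.length = n ∧ u.count 1 = k} ∈
        Set.range (cnt x n) := by
      rw [← setEq]; exact Nat.sSup_mem (setNe x n) (setBdd x n)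
    have h1' : cnt x n a ≤ k := by rw [ha]; exact hk1
    have h2' : k ≤ cnt x n b := by rw [hb]; exact hk2
    obtain ⟨m, hm⟩ := ivt (cnt x n) (fun m => cnt_step x n m) h1' h2'
    refine ⟨win x m n, factor_win x m n, ?_⟩
    intro c
    have hvl : (win x m n).length = n := win_length x m n
    have hv1 : (win x m n).count 1 = k := hm
    have cu := count01 u
    have cv := count01 (win x m n)
    fin_cases c <;> simp only [Fin.zero_eta, Fin.mk_one] <;> omega
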